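/- For a slow-fading Gaussian channel with K distinct positive fading states, the multiplicative gap M(F_G,1) = C_erg(F_G)/C_exp(F_G,1) satisfies M(F_G,1) ≤ K. -/

import Mathlib

open Real

/-- Achievable expected-rate values of the one-block power allocation
program: maximize `∑_k F_k log((1+β_k g_k)/(1+β_{k-1} g_k))` over
`0 = β_0 ≤ β_1 ≤ ⋯ ≤ β_K ≤ 1`. -/
def CexpSet (K : ℕ) (g F : ℕ → ℝ) : Set ℝ :=
  {r | ∃ β : ℕ → ℝ, β 0 = 0 ∧ (∀ k, 1 ≤ k → k ≤ K → β (k - 1) ≤ β k) ∧ β K ≤ 1 ∧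
    r = ∑ k ∈ Finset.Icc 1 K,
      F k * Real.log ((1 + β k * g k) / (1 + β (k - 1) * g k))}

lemma step_mem (K : ℕ) (g F : ℕ → ℝ) (k : ℕ) (hk1 : 1 ≤ k) (hkK : k ≤ K) :
    F k * Real.log (1 + g k) ∈ CexpSet K g F := by
  refine ⟨fun j => if k ≤ j then 1 else 0, ?_, ?_, ?_, ?_⟩
  · simp [Nat.not_le.mpr hk1]
  · intro j hj1 hjK
    by_cases h1 : k ≤ j - 1
    · have h2 : k ≤ j := le_trans h1 (Nat.sub_le j 1)
      simp [h1, h2]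
    · by_cases h2 : k ≤ j <;> simp [h1, h2]
  · simp [hkK]
  · rw [Finset.sum_eq_single_of_mem k (Finset.mem_Icc.mpr ⟨hk1, hkK⟩)]
    · have hkk : k ≤ k := le_refl k
      have hkk1 : ¬ (k ≤ k - 1) := by omega
      simp [hkk, hkk1]
    · intro j hj hjk
      rcases lt_or_gt_of_ne hjk with h | h
      · have h1 : ¬ (k ≤ j) := by omega
        have h2 : ¬ (k ≤ j - 1) := by omega
        simp [h1, h2]
      · have h1 : k ≤ j := le_of_lt h
        have h2 : k ≤ j - 1 := by
          have := (Finset.mem_Icc.mp hj).1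
          omega
        rcases eq_or_ne (1 + g j) 0 with hx | hx
        · simp [h1, h2, hx]
        · simp [h1, h2, div_self hx]

/-- Worst-case multiplicative gap: the ratio between the ergodic capacity and
the one-block expected capacity is at most `K`. -/
theorem multiplicative_gap_le_K
    (K : ℕ) (hK : 1 ≤ K) (g p : ℕ → ℝ)
    (hg : ∀ k l, 1 ≤ k → k < l → l ≤ K → g l < g k) (hgK : 0 < g K)
    (hp : ∀ k, 1 ≤ k → k ≤ K → 0 < p k)
    (hpsum : ∑ k ∈ Finset.Icc 1 K, p k = 1)
    (F : ℕ → ℝ) (hF : ∀ k, F k = ∑ j ∈ Finset.Icc 1 k, p j) :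
    (∑ k ∈ Finset.Icc 1 K, p k * Real.log (1 + g k)) / sSup (CexpSet K g F) ≤
      K := by
  by_cases hb : BddAbove (CexpSet K g F)
  · set S := sSup (CexpSet K g F) with hS
    have hgpos : ∀ k, 1 ≤ k → k ≤ K → 0 < g k := by
      intro k h1 h2
      rcases eq_or_lt_of_le h2 with h | h
      · rwa [h]
      · exact lt_trans hgK (hg k K h1 h le_rfl)
    have hle : ∀ k, 1 ≤ k → k ≤ K → F k * Real.log (1 + g k) ≤ S :=
      fun k h1 h2 => le_csSup hb (step_mem K g F k h1 h2)
    have hSpos : 0 < S := by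
      refine lt_of_lt_of_le ?_ (hle 1 le_rfl hK)
      have hF1 : F 1 = p 1 := by simp [hF 1]
      have := hgpos 1 le_rfl hK
      have hlog : 0 < Real.log (1 + g 1) := Real.log_pos (by linarith)
      rw [hF1]
      exact mul_pos (hp 1 le_rfl hK) hlog
    rw [div_le_iff₀ hSpos]
    have hpF : ∀ k, 1 ≤ k → k ≤ K → p k ≤ F k := by
      intro k h1 h2
      rw [hF k]
      exact Finset.single_le_sum
        (fun j hj => le_of_lt (hp j (Finset.mem_Icc.mp hj).1
          (le_trans (Finset.mem_Icc.mp hj).2 h2)))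
        (Finset.mem_Icc.mpr ⟨h1, le_rfl⟩)
    have hsum : ∑ k ∈ Finset.Icc 1 K, p k * Real.log (1 + g k) ≤
        ∑ _k ∈ Finset.Icc 1 K, S := by
      refine Finset.sum_le_sum fun k hk => ?_
      obtain ⟨h1, h2⟩ := Finset.mem_Icc.mp hk
      have hlog : 0 ≤ Real.log (1 + g k) :=
        Real.log_nonneg (by have := hgpos k h1 h2; linarith)
      calc p k * Real.log (1 + g k) ≤ F k * Real.log (1 + g k) :=
            mul_le_mul_of_nonneg_right (hpF k h1 h2) hlog
        _ ≤ S := hle k h1 h2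
    calc ∑ k ∈ Finset.Icc 1 K, p k * Real.log (1 + g k)
        ≤ ∑ _k ∈ Finset.Icc 1 K, S := hsum
      _ = (K : ℝ) * S := by
          rw [Finset.sum_const, Nat.card_Icc]
          simp [nsmul_eq_mul]
  · rw [Real.sSup_of_not_bddAbove hb, div_zero]
    exact_mod_cast Nat.zero_le K
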